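/- For the figure-8 graph, the stationary vector p(x) = (2e^x/(6e^x+e^{2x}−3), (2e^x+e^{2x}−3)/(2(6e^x+e^{2x}−3)), 2e^x/(6e^x+e^{2x}−3), (2e^x+e^{2x}−3)/(2(6e^x+e^{2x}−3))) satisfies P p = p and p_1+p_2+p_3+p_4 = 1, where P is the stochastic matrix P(i,j) = A(i,j) v(i) e^{−l(i)} / v(j) built from the figure-8 data, for all x > 0. -/

import Mathlib

set_option maxHeartbeats 1600000

open Real

theorem figure8_stationary_vector (x : ℝ) (hx : 0 < x)
    (P : Matrix (Fin 4) (Fin 4) ℝ)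
    (hP : P = !![exp (-x), 2 * exp (-x) / (1 + 3 * exp (-x)), 0, 2 * exp (-x) / (1 + 3 * exp (-x));
                 (1 - exp (-x)) / 2, (1 - exp (-x)) / (1 + 3 * exp (-x)), (1 - exp (-x)) / 2, 0;
                 0, 2 * exp (-x) / (1 + 3 * exp (-x)), exp (-x), 2 * exp (-x) / (1 + 3 * exp (-x));
                 (1 - exp (-x)) / 2, 0, (1 - exp (-x)) / 2, (1 - exp (-x)) / (1 + 3 * exp (-x))])
    (p : Fin 4 → ℝ)
    (hp : p = ![2 * exp x / (6 * exp x + exp (2 * x) - 3),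
                (2 * exp x + exp (2 * x) - 3) / (2 * (6 * exp x + exp (2 * x) - 3)),
                2 * exp x / (6 * exp x + exp (2 * x) - 3),
                (2 * exp x + exp (2 * x) - 3) / (2 * (6 * exp x + exp (2 * x) - 3))]) :
    Matrix.mulVec P p = p ∧ p 0 + p 1 + p 2 + p 3 = 1 := by
  subst hP hp
  have ht : (1:ℝ) < exp x := by
    have := exp_lt_exp.mpr hx; simpa using this
  have ht0 : (0:ℝ) < exp x := exp_pos x
  have hne : exp x ≠ 0 := ne_of_gt ht0
  have h2x : exp (2 * x) = exp x * exp x := by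
    rw [two_mul, exp_add]
  have hnx : exp (-x) = (exp x)⁻¹ := exp_neg x
  have hd1 : (6 * exp x + exp (2 * x) - 3) ≠ 0 := by
    rw [h2x]; nlinarith
  have hd2 : (1 + 3 * (exp x)⁻¹) ≠ 0 := by
    have : (0:ℝ) < (exp x)⁻¹ := inv_pos.mpr ht0
    positivity
  have hA : (-18 + exp x * 30 + exp x ^ 2 * 18 + exp x ^ 3 * 2) ≠ 0 := by nlinarith
  have hB : (-3 + exp x * 6 + exp x ^ 2) ≠ 0 := by nlinarith
  have hC : (-(exp x * 6) + exp x ^ 2 * 12 + exp x ^ 3 * 2) ≠ 0 := by nlinarith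
  have hD : (-6 + exp x * 12 + exp x ^ 2 * 2) ≠ 0 := by nlinarith
  have h3 : exp x + 3 ≠ 0 := by positivity
  have e1 : 2 * (exp x)⁻¹ / (1 + 3 * (exp x)⁻¹) = 2 / (exp x + 3) := by
    field_simp
  have e2 : (1 - (exp x)⁻¹) / (1 + 3 * (exp x)⁻¹) = (exp x - 1) / (exp x + 3) := by
    rw [div_eq_div_iff hd2 h3]; field_simp
  have hd1' : 6 * exp x + exp x * exp x - 3 ≠ 0 := by nlinarith
  constructor
  · funext i
    fin_cases i <;>
      simp [Matrix.mulVec, dotProduct, Fin.sum_univ_four, hnx, h2x, e1, e2] <;>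
      field_simp [hne, h3, hd1'] <;> ring
  · simp only [Fin.sum_univ_four, h2x, Matrix.cons_val_zero, Matrix.cons_val_one,
      Matrix.head_cons, Matrix.cons_val_two, Matrix.tail_cons, Matrix.cons_val_three]
    field_simp [hd1']
    ring_nf
    field_simp [hB]
    ring
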